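/- Let d : {1,…,l}² → ℝ be a metric and let D_loc^d ⊆ ℝ^{d×l} be the associated dual constraint set (matrices v = (v¹|…|v^l) with columns summing to zero and ‖v^i − v^j‖ ≤ d(i,j) for all i ≠ j). Then for any pair of indices i, j ∈ {1,…,l}, the quantity d(i,j) is the maximum over v ∈ D_loc^d of the difference of first coordinates (v^i)₁ − (v^j)₁; that is, (v^i)₁ − (v^j)₁ ≤ d(i,j) for every v ∈ D_loc^d, and some v ∈ D_loc^d attains equality. -/

import Mathlib

lemma abs_apply_le_norm {m : ℕ} (x : EuclideanSpace ℝ (Fin m)) (p : Fin m) :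
    |x p| ≤ ‖x‖ := by
  rw [EuclideanSpace.norm_eq]
  have h1 : |x p| = Real.sqrt (‖x p‖ ^ 2) := by
    rw [Real.sqrt_sq_eq_abs]; simp
  rw [h1]
  apply Real.sqrt_le_sqrt
  exact Finset.single_le_sum (f := fun k => ‖x k‖ ^ 2)
    (fun k _ => sq_nonneg _) (Finset.mem_univ p)

theorem stmt2 (l m : ℕ) (hl : 1 ≤ l) (hm : 0 < m)
    (d : Fin l → Fin l → ℝ)
    (hdiag : ∀ i, d i i = 0)
    (hsymm : ∀ i j, d i j = d j i)
    (hpos : ∀ i j, i ≠ j → 0 < d i j)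
    (htri : ∀ i j k, d i k ≤ d i j + d j k)
    (Dloc : Set (Fin l → EuclideanSpace ℝ (Fin m)))
    (hD : Dloc = {v | (∑ k, v k) = 0 ∧ ∀ i j, i ≠ j → ‖v i - v j‖ ≤ d i j})
    (i j : Fin l) :
    IsGreatest {x : ℝ | ∃ v ∈ Dloc, x = v i ⟨0, hm⟩ - v j ⟨0, hm⟩} (d i j) := by
  subst hD
  constructor
  · set c : ℝ := (∑ k, d k j) / l with hc
    set e : EuclideanSpace ℝ (Fin m) := EuclideanSpace.single ⟨0, hm⟩ (1 : ℝ) with he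
    refine ⟨fun k => (d k j - c) • e, ⟨?_, ?_⟩, ?_⟩
    · rw [← Finset.sum_smul]
      have hl0 : (l : ℝ) ≠ 0 := by positivity
      have : (∑ k, (d k j - c)) = 0 := by
        rw [Finset.sum_sub_distrib, Finset.sum_const, Finset.card_univ,
          Fintype.card_fin, hc]
        rw [nsmul_eq_mul]
        field_simp
        ring
      rw [this, zero_smul]
    · intro a b hab
      have h2 : (d a j - c) • e - (d b j - c) • e = (d a j - d b j) • e := by
        rw [← sub_smul]; ring_nf
      show ‖(d a j - c) • e - (d b j - c) • e‖ ≤ d a b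
      rw [h2, norm_smul]
      have hne : ‖e‖ = 1 := by simp [he, EuclideanSpace.norm_single]
      rw [hne, mul_one, Real.norm_eq_abs, abs_sub_le_iff]
      constructor
      · linarith [htri a b j]
      · linarith [htri b a j, hsymm a b]
    · have hep : e ⟨0, hm⟩ = 1 := by simp [he]
      show d i j = ((d i j - c) • e) ⟨0, hm⟩ - ((d j j - c) • e) ⟨0, hm⟩
      simp only [PiLp.smul_apply, hep, smul_eq_mul, mul_one]
      rw [hdiag]; ring
  · rintro x ⟨v, ⟨hsum, hbd⟩, rfl⟩
    by_cases hij : i = j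
    · subst hij; simp [hdiag]
    · calc v i ⟨0, hm⟩ - v j ⟨0, hm⟩ ≤ |(v i - v j) ⟨0, hm⟩| := by
            simp only [PiLp.sub_apply]; exact le_abs_self _
        _ ≤ ‖v i - v j‖ := abs_apply_le_norm _ _
        _ ≤ d i j := hbd i j hij
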